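/- Assume λ = μ⁺, κ < μ, θ = λ, and μ = μ^κ (cardinal exponentiation), with λ ≥ θ ≥ κ ≥ ℵ₀. Then the class 𝔥_{λ, λ, κ} has a we-universal member. -/

import Mathlib

open Cardinal Set

abbrev Ordi := Ordinal.{0}
abbrev Cardi := Cardinal.{0}

/-- the set of ordinals `s` has order type `δ`. -/
def OtpEq (s : Set Ordi) (δ : Ordi) : Prop := Nonempty (s ≃o Set.Iio δ)

/-- `f` is a partial function from `λ` to `λ`. -/
def PFDomRan (lam : Cardi) (f : Ordi →. Ordi) : Prop :=
  f.Dom ⊆ Set.Iio lam.ord ∧ ∀ a b, b ∈ f a → b < lam.ord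

/-- `f` is strictly increasing (on its domain). -/
def PFInc (f : Ordi →. Ordi) : Prop :=
  ∀ a b c d, c ∈ f a → d ∈ f b → a < b → c < d

/-- `f` is one-to-one (on its domain). -/
def PFInj (f : Ordi →. Ordi) : Prop :=
  ∀ a b c, c ∈ f a → c ∈ f b → a = b

/-- the partial function `g` extends the partial function `f`. -/
def PFLe (f g : Ordi →. Ordi) : Prop := ∀ a b, b ∈ f a → b ∈ g a

/-- the total function `g` extends the partial function `f`. -/
def TotalExt (g : Ordi → Ordi) (f : Ordi →. Ordi) : Prop :=
  ∀ a b, b ∈ f a → g a = b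

/-- `g` is a total function from `λ` to `λ`. -/
def TotalFn (lam : Cardi) (g : Ordi → Ordi) : Prop :=
  ∀ a < lam.ord, g a < lam.ord

/-- `g` is injective as a function from `λ` to `λ`. -/
def TotalInj (lam : Cardi) (g : Ordi → Ordi) : Prop :=
  Set.InjOn g (Set.Iio lam.ord)

def Pr (lam kap : Cardi) : Prop :=
  ∃ F : Set (Ordi →. Ordi),
    Cardinal.mk F ≤ Cardinal.lift.{1} lam ∧
    (∀ f ∈ F, PFDomRan lam f ∧ PFInc f ∧ OtpEq f.Dom kap.ord) ∧
    (∀ f ∈ F, ∀ g ∈ F, f ≠ g →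
      #(↥(f.Dom ∩ g.Dom)) < Cardinal.lift.{1} kap) ∧
    (∀ g : Ordi →. Ordi, PFDomRan lam g → PFInc g →
      #(↥g.Dom) = Cardinal.lift.{1} lam → ∃ f ∈ F, PFLe f g)

def Ps (lam kap : Cardi) : Prop :=
  ∃ F : Set (Ordi →. Ordi),
    Cardinal.mk F ≤ Cardinal.lift.{1} lam ∧
    (∀ f ∈ F, PFDomRan lam f ∧ PFInc f ∧ OtpEq f.Dom kap.ord) ∧
    (∀ f ∈ F, ∀ g ∈ F, f ≠ g →
      #(↥(f.Dom ∩ g.Dom)) < Cardinal.lift.{1} kap) ∧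
    (∀ g : Ordi → Ordi, TotalFn lam g → TotalInj lam g →
      ∃ f ∈ F, TotalExt g f)

def Pr' (lam : Cardi) (δ : Ordi) : Prop :=
  ∃ F : Set (Ordi →. Ordi),
    Cardinal.mk F ≤ Cardinal.lift.{1} lam ∧
    (∀ f ∈ F, PFDomRan lam f ∧ PFInj f ∧ OtpEq f.Dom δ) ∧
    (∀ f ∈ F, ∀ g ∈ F, f ≠ g →
      (∃ c ∈ f.Dom, ∀ x ∈ f.Dom ∩ g.Dom, x < c) ∧
      (∃ c ∈ g.Dom, ∀ x ∈ f.Dom ∩ g.Dom, x < c)) ∧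
    (∀ g : Ordi →. Ordi, PFDomRan lam g → PFInj g →
      #(↥g.Dom) = Cardinal.lift.{1} lam → ∃ f ∈ F, PFLe f g)

def Ps' (lam : Cardi) (δ : Ordi) : Prop :=
  ∃ F : Set (Ordi →. Ordi),
    Cardinal.mk F ≤ Cardinal.lift.{1} lam ∧
    (∀ f ∈ F, PFDomRan lam f ∧ PFInj f ∧ OtpEq f.Dom δ) ∧
    (∀ f ∈ F, ∀ g ∈ F, f ≠ g →
      (∃ c ∈ f.Dom, ∀ x ∈ f.Dom ∩ g.Dom, x < c) ∧
      (∃ c ∈ g.Dom, ∀ x ∈ f.Dom ∩ g.Dom, x < c)) ∧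
    (∀ g : Ordi → Ordi, TotalFn lam g → TotalInj lam g →
      ∃ f ∈ F, TotalExt g f)

def Pr3 (chi lam mu : Cardi) (α : Ordi) : Prop :=
  ∃ F : Set (Ordi →. Ordi),
    Cardinal.mk F ≤ Cardinal.lift.{1} chi ∧
    (∀ f ∈ F, f.Dom ⊆ Set.Iio mu.ord ∧ (∀ a b, b ∈ f a → b < lam.ord) ∧
      OtpEq f.Dom α) ∧
    (∀ g : Ordi → Ordi, (∀ a < mu.ord, g a < lam.ord) →
      ∃ f ∈ F, TotalExt g f)

/-- weak embedding of graphs: injective, maps edges to edges. -/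
def WeakEmb {V W : Type*} (G : SimpleGraph V) (H : SimpleGraph W) (f : V → W) : Prop :=
  Function.Injective f ∧ ∀ a b, G.Adj a b → H.Adj (f a) (f b)

/-- strong embedding of graphs: injective, maps edges to edges and non-edges to non-edges. -/
def StrongEmb {V W : Type*} (G : SimpleGraph V) (H : SimpleGraph W) (f : V → W) : Prop :=
  Function.Injective f ∧ ∀ a b, G.Adj a b ↔ H.Adj (f a) (f b)

/-- the complete `(θ, κ)`-bipartite graph cannot be weakly embedded into `G`. -/
def NoKbip {V : Type} (G : SimpleGraph V) (θ κ : Cardi) : Prop :=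
  ¬ ∃ A B : Set V, Disjoint A B ∧ #A = θ ∧ #B = κ ∧
      ∀ a ∈ A, ∀ b ∈ B, G.Adj a b

/-- `G` is bipartite. -/
def IsBipartite {V : Type*} (G : SimpleGraph V) : Prop :=
  ∃ s : Set V, ∀ a b, G.Adj a b → (a ∈ s ↔ b ∉ s)

/-- `♣_S` where `S` is a set of ordinals below `λ`. -/
def Clubsuit (lam : Cardi) (S : Set Ordi) : Prop :=
  ∃ A : Ordi → Set Ordi,
    (∀ δ ∈ S, (δ ≠ 0 ∧ ∀ a < δ, Order.succ a < δ) →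
      A δ ⊆ Set.Iio δ ∧ (∀ b < δ, ∃ x ∈ A δ, b < x)) ∧
    (∀ X ⊆ Set.Iio lam.ord, (∀ b < lam.ord, ∃ x ∈ X, b < x) →
      ∃ δ ∈ S, (δ ≠ 0 ∧ ∀ a < δ, Order.succ a < δ) ∧ A δ ⊆ X)

noncomputable def Ubd (kap lam : Cardi) : Cardi :=
  sInf { c : Cardi | ∃ P : Set (Set Ordi), #P = Cardinal.lift.{1} c ∧
    (∀ A ∈ P, A ⊆ Set.Iio lam.ord ∧ #(↥A) = Cardinal.lift.{1} kap) ∧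
    ∀ f : Ordi → Ordi, (∀ i < kap.ord, f i < lam.ord) →
      ∃ A ∈ P, ∀ b < kap.ord, ∃ i, b ≤ i ∧ i < kap.ord ∧ f i ∈ A }

namespace Stmt19

lemma bnd_reg {c : Cardinal.{0}} (hreg : c.IsRegular) (S : Set c.ord.ToType)
    (h : #S < c) : ∃ u, ∀ s ∈ S, s < u := by
  by_contra hc
  push_neg at hc
  have hcof := Order.cof_le (α := c.ord.ToType) (s := S) (fun a => hc a)
  rw [Ordinal.cof_toType, hreg.cof_eq] at hcof
  exact absurd h (not_lt.mpr hcof)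

structure Ctx : Type 1 where
  mu : Cardinal.{0}
  kap : Cardinal.{0}
  h0 : ℵ₀ ≤ kap
  h1 : kap < mu
  h3 : mu ^ kap = mu

namespace Ctx

variable (C : Ctx)

noncomputable def lam : Cardinal.{0} := Order.succ C.mu

lemma mu_inf : ℵ₀ ≤ C.mu := C.h0.trans C.h1.le
lemma lam_inf : ℵ₀ ≤ C.lam := C.mu_inf.trans (Order.le_succ _)
lemma mu_lt_lam : C.mu < C.lam := Order.lt_succ _
lemma kap_lt_lam : C.kap < C.lam := C.h1.trans C.mu_lt_lam
lemma lam_reg : C.lam.IsRegular := isRegular_succ C.mu_inf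
lemma le_mu_of_lt_lam {c : Cardinal.{0}} (h : c < C.lam) : c ≤ C.mu := Order.lt_succ_iff.mp h
lemma kap_ne_zero : C.kap ≠ 0 := by
  intro h; exact absurd (h ▸ C.h0) (by simp [aleph0_ne_zero])
lemma kap_pos : 0 < C.kap := pos_iff_ne_zero.mpr C.kap_ne_zero
lemma mu_ne_zero : C.mu ≠ 0 := by
  intro h; exact absurd (h ▸ C.mu_inf) (by simp [aleph0_ne_zero])
lemma kapsucc_le_mu : Order.succ C.kap ≤ C.mu := Order.succ_le_of_lt C.h1
lemma kapsucc_reg : (Order.succ C.kap).IsRegular := isRegular_succ C.h0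
lemma kap_le_mu : C.kap ≤ C.mu := C.h1.le

/-- vertex type -/
def V : Type := C.lam.ord.ToType

noncomputable instance : LinearOrder C.V := linearOrder_toType _
instance : WellFoundedLT C.V := wellFoundedLT_toType _

lemma mkV : #C.V = C.lam := by
  show #(C.lam.ord.ToType) = C.lam
  rw [Cardinal.mk_toType, Cardinal.card_ord]

lemma mkIio_le_mu (g : C.V) : #(Iio g) ≤ C.mu :=
  C.le_mu_of_lt_lam (Cardinal.mk_Iio_ord_toType g)

lemma mkIic_le_mu (g : C.V) : #(Iic g) ≤ C.mu := by
  have : (Iic g : Set C.V) = insert g (Iio g) := by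
    ext x; simp [le_iff_lt_or_eq, or_comm]
  rw [this]
  refine mk_insert_le.trans ?_
  calc #(Iio g) + 1 ≤ C.mu + C.mu :=
        add_le_add (C.mkIio_le_mu g) (le_trans (by norm_num) C.mu_inf)
    _ = C.mu := add_eq_self C.mu_inf

lemma bndV (S : Set C.V) (h : #S < C.lam) : ∃ u : C.V, ∀ s ∈ S, s < u := by
  by_contra hc
  push_neg at hc
  have hcof := Order.cof_le (α := C.lam.ord.ToType) (s := S) (fun a => hc a)
  rw [Ordinal.cof_toType, C.lam_reg.cof_eq] at hcof
  exact absurd h (not_lt.mpr hcof)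

/-- the auxiliary type of size mu -/
def M : Type := C.mu.ord.ToType

lemma mkM : #C.M = C.mu := by
  show #(C.mu.ord.ToType) = C.mu
  rw [Cardinal.mk_toType, Cardinal.card_ord]

instance : Nonempty C.M := by
  rw [← mk_ne_zero_iff, C.mkM]; exact C.mu_ne_zero

lemma mkVMM : #C.V = #(C.V × C.M × C.M) := by
  rw [mk_prod, mk_prod, lift_id, lift_id, lift_id, C.mkM, C.mkV]
  have hmm : C.mu * C.mu = C.mu := mul_eq_self C.mu_inf
  rw [hmm]
  exact (mul_eq_left (C.mu_inf.trans (Order.le_succ _)) (Order.le_succ C.mu)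
    C.mu_ne_zero).symm

noncomputable def e : C.V ≃ C.V × C.M × C.M := (Cardinal.eq.mp C.mkVMM).some

noncomputable def blk (v : C.V) : C.V := (C.e v).1
noncomputable def lab (v : C.V) : C.M := (C.e v).2.1

lemma mk_blk_le (g : C.V) : #{v : C.V | C.blk v ≤ g} ≤ C.mu := by
  have hinj : Function.Injective
      (fun v : {v : C.V | C.blk v ≤ g} => ((⟨(C.e v.1).1, v.2⟩ : Iic g), (C.e v.1).2)) := by
    intro a b hab
    simp only [Prod.mk.injEq, Subtype.mk.injEq] at hab
    apply Subtype.ext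
    apply C.e.injective
    exact Prod.ext (congrArg Subtype.val hab.1) hab.2
  refine (mk_le_of_injective hinj).trans ?_
  rw [mk_prod, mk_prod, lift_id, lift_id, lift_id, C.mkM]
  calc #(Iic g) * (C.mu * C.mu) ≤ C.mu * (C.mu * C.mu) :=
        mul_le_mul_left (C.mkIic_le_mu g) _
    _ = C.mu := by rw [mul_eq_self C.mu_inf, mul_eq_self C.mu_inf]

lemma mk_blk_lt_le (g : C.V) : #{v : C.V | C.blk v < g} ≤ C.mu := by
  have hsub : {v : C.V | C.blk v < g} ⊆ {v : C.V | C.blk v ≤ g} := by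
    intro v hv
    exact le_of_lt (show C.blk v < g from hv)
  exact (mk_le_mk_of_subset hsub).trans (C.mk_blk_le g)

/-- `Y` is an allowed neighborhood-set for a server in block `i`. -/
def Allowed (i : C.V) (Y : Set C.V) : Prop :=
  (∀ y ∈ Y, C.blk y < i) ∧ #Y ≤ C.kap ∧
    ∀ g g' : C.V, g < g' → g' < i → #(Y ∩ {y | C.blk y ≤ g} : Set C.V) < C.kap

lemma allowed_empty (i : C.V) : C.Allowed i ∅ := by
  refine ⟨by simp, by simp, fun g g' _ _ => ?_⟩
  rw [empty_inter]
  simpa using C.kap_pos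

lemma mk_allowed_le (i : C.V) : #{Y : Set C.V // C.Allowed i Y} ≤ C.mu := by
  have hinj : Function.Injective
      (fun Y : {Y : Set C.V // C.Allowed i Y} =>
        (⟨Y.1, fun y hy => Y.2.1 y hy, Y.2.2.1⟩ :
          {t : Set C.V // t ⊆ {v | C.blk v < i} ∧ #t ≤ C.kap})) := by
    intro a b hab
    have h2 := congrArg Subtype.val hab
    simp only at h2
    exact Subtype.ext h2
  refine (mk_le_of_injective hinj).trans ?_
  refine (mk_bounded_subset_le _ C.kap).trans ?_
  have h1 : max #{v : C.V | C.blk v < i} ℵ₀ ≤ C.mu :=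
    max_le (C.mk_blk_lt_le i) C.mu_inf
  calc (max #{v : C.V | C.blk v < i} ℵ₀) ^ C.kap ≤ C.mu ^ C.kap :=
        power_le_power_right h1
    _ = C.mu := C.h3

noncomputable def sigmaEmb (i : C.V) :
    {Y : Set C.V // C.Allowed i Y} ↪ C.M :=
  Classical.choice ((Cardinal.le_def _ _).mp (by rw [C.mkM]; exact C.mk_allowed_le i))

noncomputable def sigma (i : C.V) : C.M → {Y : Set C.V // C.Allowed i Y} :=
  haveI : Nonempty {Y : Set C.V // C.Allowed i Y} := ⟨⟨∅, C.allowed_empty i⟩⟩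
  Function.invFun (C.sigmaEmb i)

lemma sigma_surj (i : C.V) : Function.Surjective (C.sigma i) := by
  haveI : Nonempty {Y : Set C.V // C.Allowed i Y} := ⟨⟨∅, C.allowed_empty i⟩⟩
  exact Function.invFun_surjective (C.sigmaEmb i).2

/-- the neighborhood-set label of a vertex -/
noncomputable def Yof (w : C.V) : Set C.V := (C.sigma (C.blk w) (C.lab w)).1

lemma Yof_allowed (w : C.V) : C.Allowed (C.blk w) (C.Yof w) := (C.sigma (C.blk w) (C.lab w)).2

lemma Yof_blk_lt {w y : C.V} (h : y ∈ C.Yof w) : C.blk y < C.blk w :=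
  (C.Yof_allowed w).1 y h

/-- The universal graph. -/
noncomputable def Gstar : SimpleGraph C.V where
  Adj x y := x ≠ y ∧ (C.blk x = C.blk y ∨ x ∈ C.Yof y ∨ y ∈ C.Yof x)
  symm := by
    constructor
    rintro x y ⟨hne, h⟩
    exact ⟨hne.symm, by tauto⟩
  loopless := by constructor; rintro x ⟨hne, _⟩; exact hne rfl

end Ctx
end Stmt19

namespace Stmt19
namespace Ctx
variable (C : Ctx)

lemma mk_fiber_le (z : C.V) : #{w : C.V | C.blk w = z} ≤ C.mu := by
  have hsub : {w : C.V | C.blk w = z} ⊆ {w : C.V | C.blk w ≤ z} := by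
    intro w hw; exact le_of_eq (show C.blk w = z from hw)
  exact (mk_le_mk_of_subset hsub).trans (C.mk_blk_le z)

/-- the servers containing a fixed κ-set `B` form a small set -/
lemma servers_small (B : Set C.V) (hB : #B = C.kap) :
    #{w : C.V | B ⊆ C.Yof w} ≤ C.mu := by
  classical
  -- bound on the blocks of B
  have hBlt : #(C.blk '' B) < C.lam := by
    refine lt_of_le_of_lt mk_image_le ?_
    rw [hB]; exact C.kap_lt_lam
  obtain ⟨u, hu⟩ := C.bndV _ hBlt
  -- the set of "cut points"
  set T : Set C.V := {g : C.V | C.kap ≤ #(B ∩ {b | C.blk b ≤ g} : Set C.V)} with hT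
  have huT : u ∈ T := by
    have : B ∩ {b | C.blk b ≤ u} = B := by
      apply inter_eq_left.mpr
      intro b hb
      exact le_of_lt (hu _ (mem_image_of_mem _ hb))
    rw [hT, mem_setOf_eq, this, hB]
  have hTne : T.Nonempty := ⟨u, huT⟩
  set sB : C.V := wellFounded_lt.min T hTne with hsB
  have hsBT : sB ∈ T := wellFounded_lt.min_mem T hTne
  -- no server's block has anything strictly between sB and it
  have key : ∀ w : C.V, B ⊆ C.Yof w → ∀ g', sB < g' → ¬ g' < C.blk w := by
    intro w hw g' h1 h2
    have hcut := (C.Yof_allowed w).2.2 sB g' h1 h2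
    have hsub : B ∩ {b | C.blk b ≤ sB} ⊆ C.Yof w ∩ {y | C.blk y ≤ sB} :=
      inter_subset_inter_left _ hw
    exact absurd (lt_of_le_of_lt (hsBT.trans (mk_le_mk_of_subset hsub)) hcut) (lt_irrefl _)
  by_cases hex : ∃ w0 : C.V, B ⊆ C.Yof w0 ∧ sB < C.blk w0
  · obtain ⟨w0, hw0, hw0b⟩ := hex
    have hsub : {w : C.V | B ⊆ C.Yof w} ⊆
        {w : C.V | C.blk w ≤ sB} ∪ {w : C.V | C.blk w = C.blk w0} := by
      intro w hw
      rcases le_or_gt (C.blk w) sB with h | h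
      · exact Or.inl h
      · right
        show C.blk w = C.blk w0
        have h1 : ¬ C.blk w0 < C.blk w := key w hw _ hw0b
        have h2 : ¬ C.blk w < C.blk w0 := key w0 hw0 _ h
        exact le_antisymm (not_lt.mp h1) (not_lt.mp h2)
    refine (mk_le_mk_of_subset hsub).trans ?_
    refine (mk_union_le _ _).trans ?_
    have := C.mk_blk_le sB
    have := C.mk_fiber_le (C.blk w0)
    calc #{w : C.V | C.blk w ≤ sB} + #{w : C.V | C.blk w = C.blk w0} ≤ C.mu + C.mu :=
          add_le_add (C.mk_blk_le sB) (C.mk_fiber_le (C.blk w0))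
      _ = C.mu := add_eq_self C.mu_inf
  · push_neg at hex
    have hsub : {w : C.V | B ⊆ C.Yof w} ⊆ {w : C.V | C.blk w ≤ sB} := by
      intro w hw
      exact hex w hw
    exact (mk_le_mk_of_subset hsub).trans (C.mk_blk_le sB)

theorem gstar_noKbip : NoKbip C.Gstar C.lam C.kap := by
  rintro ⟨A, B, hdisj, hA, hB, hadj⟩
  have hBlt : #(C.blk '' B) < C.lam := by
    refine lt_of_le_of_lt mk_image_le ?_
    rw [hB]; exact C.kap_lt_lam
  obtain ⟨u, hu⟩ := C.bndV _ hBlt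
  have hsub : A ⊆ {a : C.V | C.blk a < u} ∪ {w : C.V | B ⊆ C.Yof w} := by
    intro a ha
    by_cases hBa : B ⊆ C.Yof a
    · exact Or.inr hBa
    · left
      obtain ⟨b, hb, hnb⟩ := not_subset.mp hBa
      obtain ⟨hne, hcase⟩ := hadj a ha b hb
      rcases hcase with h | h | h
      · show C.blk a < u
        rw [h]; exact hu _ (mem_image_of_mem _ hb)
      · exact lt_trans (C.Yof_blk_lt h) (hu _ (mem_image_of_mem _ hb))
      · exact absurd h hnb
  have : C.lam ≤ C.mu := by
    calc C.lam = #A := hA.symm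
      _ ≤ #({a : C.V | C.blk a < u} ∪ {w : C.V | B ⊆ C.Yof w} : Set C.V) :=
          mk_le_mk_of_subset hsub
      _ ≤ #{a : C.V | C.blk a < u} + #{w : C.V | B ⊆ C.Yof w} := mk_union_le _ _
      _ ≤ C.mu + C.mu := add_le_add (C.mk_blk_lt_le u) (C.servers_small B hB)
      _ = C.mu := add_eq_self C.mu_inf
  exact absurd this (not_le.mpr C.mu_lt_lam)



section EX

noncomputable def srel (W : Set C.V) : ↥W → ↥W → Prop := Subrel ((· < ·) : C.V → C.V → Prop) W
instance iwoVlt : IsWellOrder C.V ((· < ·) : C.V → C.V → Prop) := isWellOrder_lt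
instance (W : Set C.V) : IsWellOrder ↥W (C.srel W) := by
  unfold srel
  haveI := C.iwoVlt
  exact inferInstanceAs (IsWellOrder (Subtype (· ∈ W)) (Subrel (· < ·) (· ∈ W)))

lemma ex_lemma (W : Set C.V) (hW : C.kap < #W) :
    ∃ g ∈ W, C.kap ≤ #(W ∩ Iio g : Set C.V) := by
  by_contra hcon
  push_neg at hcon
  have hcut : ∀ w : ↥W, (Ordinal.typein (C.srel W) w).card < C.kap := by
    intro w
    show #{y : ↥W // C.srel W y w} < C.kap
    have hequiv : {y : ↥W // C.srel W y w} ≃ ↥(W ∩ Iio (w : C.V)) :=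
      ⟨fun y => ⟨y.1.1, y.1.2, y.2⟩, fun y => ⟨⟨y.1, y.2.1⟩, y.2.2⟩,
        fun y => rfl, fun y => rfl⟩
    rw [mk_congr hequiv]
    exact hcon (w : C.V) w.2
  have htype : Ordinal.type (C.srel W) ≤ C.kap.ord := by
    by_contra h
    push_neg at h
    obtain ⟨w, hw⟩ := Ordinal.typein_surj (C.srel W) h
    have := hcut w
    rw [hw, Cardinal.card_ord] at this
    exact absurd this (lt_irrefl _)
  have : #↥W ≤ C.kap := by
    have h1 : (Ordinal.type (C.srel W)).card ≤ C.kap.ord.card := Ordinal.card_le_card htype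
    rwa [Ordinal.card_type, Cardinal.card_ord] at h1
  exact absurd hW (not_lt.mpr this)

end EX

section Closure
variable (G : SimpleGraph C.V)

/-- common neighborhood -/
def cn (B : Set C.V) : Set C.V := {v | ∀ b ∈ B, G.Adj v b}

lemma cn_small (hG : NoKbip G C.lam C.kap) (B : Set C.V) (hB : #B = C.kap) :
    #(C.cn G B) ≤ C.mu := by
  by_contra h
  have hlam : C.lam ≤ #(C.cn G B) := Order.succ_le_of_lt (not_le.mp h)
  obtain ⟨A, hAsub, hA⟩ := le_mk_iff_exists_subset.mp hlam
  apply hG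
  refine ⟨A, B, ?_, hA, hB, ?_⟩
  · rw [disjoint_left]
    intro a haA haB
    exact G.irrefl (hAsub haA a haB)
  · intro a haA b hbB
    exact hAsub haA b hbB

/-- closed under common neighborhoods of κ-sized subsets -/
def Closed (S : Set C.V) : Prop := ∀ B ⊆ S, #B = C.kap → C.cn G B ⊆ S

/-- the iteration index type -/
def K : Type := (Order.succ C.kap).ord.ToType
noncomputable instance : LinearOrder C.K := linearOrder_toType _
instance : WellFoundedLT C.K := wellFoundedLT_toType _
lemma mkK : #C.K = Order.succ C.kap := by
  show #((Order.succ C.kap).ord.ToType) = _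
  rw [Cardinal.mk_toType, Cardinal.card_ord]
instance : Nonempty C.K := by
  rw [← mk_ne_zero_iff, C.mkK]
  intro h
  exact absurd (h ▸ (C.h0.trans (Order.le_succ _))) (by simp [aleph0_ne_zero])

lemma bndK (S : Set C.K) (h : #S < Order.succ C.kap) : ∃ u : C.K, ∀ s ∈ S, s < u := by
  by_contra hc
  push_neg at hc
  have hcof := Order.cof_le (α := (Order.succ C.kap).ord.ToType) (s := S) (fun a => hc a)
  rw [Ordinal.cof_toType, C.kapsucc_reg.cof_eq] at hcof
  exact absurd h (not_lt.mpr hcof)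

lemma mkIioK_le (k : C.K) : #(Iio k) ≤ C.kap := by
  have : #(Iio k) < Order.succ C.kap := Cardinal.mk_Iio_ord_toType k
  exact Order.lt_succ_iff.mp this

/-- one closure step -/
def step (X : Set C.V) : Set C.V :=
  X ∪ ⋃ (B : {B : Set C.V // B ⊆ X ∧ #B = C.kap}), C.cn G B.1

lemma subset_step (X : Set C.V) : X ⊆ C.step G X := subset_union_left

lemma step_card (hG : NoKbip G C.lam C.kap) (X : Set C.V) (hX : #X ≤ C.mu) :
    #(C.step G X) ≤ C.mu := by
  refine (mk_union_le _ _).trans ?_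
  have hidx : #{B : Set C.V // B ⊆ X ∧ #B = C.kap} ≤ C.mu := by
    have hinj : Function.Injective
        (fun B : {B : Set C.V // B ⊆ X ∧ #B = C.kap} =>
          (⟨B.1, B.2.1, le_of_eq B.2.2⟩ : {t : Set C.V // t ⊆ X ∧ #t ≤ C.kap})) := by
      intro a b hab
      have h2 := congrArg Subtype.val hab
      simp only at h2
      exact Subtype.ext h2
    refine (mk_le_of_injective hinj).trans ?_
    refine (mk_bounded_subset_le _ C.kap).trans ?_
    calc (max #X ℵ₀) ^ C.kap ≤ C.mu ^ C.kap :=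
          power_le_power_right (max_le hX C.mu_inf)
      _ = C.mu := C.h3
  have hUnion : #(⋃ (B : {B : Set C.V // B ⊆ X ∧ #B = C.kap}), C.cn G B.1) ≤ C.mu := by
    rcases isEmpty_or_nonempty {B : Set C.V // B ⊆ X ∧ #B = C.kap} with hemp | hne
    · rw [iUnion_of_empty]
      simp [C.mu_ne_zero, Cardinal.zero_le]
    · refine (mk_iUnion_le _).trans ?_
      have hsup : ⨆ (B : {B : Set C.V // B ⊆ X ∧ #B = C.kap}), #(C.cn G B.1) ≤ C.mu :=
        ciSup_le' fun B => C.cn_small G hG B.1 B.2.2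
      calc #{B : Set C.V // B ⊆ X ∧ #B = C.kap} *
            (⨆ (B : {B : Set C.V // B ⊆ X ∧ #B = C.kap}), #(C.cn G B.1)) ≤ C.mu * C.mu :=
            mul_le_mul' hidx hsup
        _ = C.mu := mul_eq_self C.mu_inf
  calc #X + _ ≤ C.mu + C.mu := add_le_add hX hUnion
    _ = C.mu := add_eq_self C.mu_inf

/-- iterated closure -/
noncomputable def F (S : Set C.V) : C.K → Set C.V :=
  wellFounded_lt.fix fun k ih => C.step G (S ∪ ⋃ j : Iio k, ih j.1 j.2)

lemma F_eq (S : Set C.V) (k : C.K) :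
    C.F G S k = C.step G (S ∪ ⋃ j : Iio k, C.F G S j.1) := by
  unfold F
  rw [WellFounded.fix_eq]

lemma subset_F (S : Set C.V) (k : C.K) : S ⊆ C.F G S k := by
  rw [F_eq]
  exact subset_union_left.trans (C.subset_step G _)

lemma F_mono (S : Set C.V) {j k : C.K} (h : j < k) : C.F G S j ⊆ C.F G S k := by
  conv_rhs => rw [F_eq]
  refine subset_trans ?_ (subset_trans subset_union_right (C.subset_step G _))
  exact subset_iUnion_of_subset ⟨j, h⟩ (subset_refl _)

lemma F_card (hG : NoKbip G C.lam C.kap) (S : Set C.V) (hS : #S ≤ C.mu) (k : C.K) :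
    #(C.F G S k) ≤ C.mu := by
  induction k using WellFoundedLT.induction with
  | ind k ih => ?_
  rw [F_eq]
  refine C.step_card G hG _ ?_
  refine (mk_union_le _ _).trans ?_
  have hU : #(⋃ j : Iio k, C.F G S j.1) ≤ C.mu := by
    rcases isEmpty_or_nonempty (Iio k : Set C.K) with hemp | hne
    · rw [iUnion_of_empty]; simp [Cardinal.zero_le]
    · refine (mk_iUnion_le _).trans ?_
      have hsup : ⨆ j : Iio k, #(C.F G S j.1) ≤ C.mu :=
        ciSup_le' fun j => ih j.1 j.2
      calc #(Iio k) * (⨆ j : Iio k, #(C.F G S j.1)) ≤ C.kap * C.mu :=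
            mul_le_mul' (C.mkIioK_le k) hsup
        _ ≤ C.mu * C.mu := mul_le_mul_left C.kap_le_mu _
        _ = C.mu := mul_eq_self C.mu_inf
  calc #S + _ ≤ C.mu + C.mu := add_le_add hS hU
    _ = C.mu := add_eq_self C.mu_inf

/-- the closure and its properties -/
lemma closure_exists (hG : NoKbip G C.lam C.kap) (S : Set C.V) (hS : #S ≤ C.mu) :
    ∃ T, S ⊆ T ∧ C.Closed G T ∧ #T ≤ C.mu := by
  classical
  refine ⟨S ∪ ⋃ k, C.F G S k, subset_union_left, ?_, ?_⟩
  · intro B hB hBk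
    -- find uniform stage
    have hchoice : ∀ b : ↥B, ∃ k : C.K, (b : C.V) ∈ C.F G S k := by
      rintro ⟨b, hb⟩
      rcases hB hb with h | h
      · exact ⟨Classical.arbitrary _, C.subset_F G S _ h⟩
      · obtain ⟨t, ⟨k, rfl⟩, hbt⟩ := h
        exact ⟨k, hbt⟩
    choose kf hkf using hchoice
    have hrange : #(range kf) < Order.succ C.kap := by
      refine lt_of_le_of_lt mk_range_le ?_
      rw [hBk]; exact Order.lt_succ _
    obtain ⟨kstar, hkstar⟩ := C.bndK _ hrange
    have hsing : ∀ x : C.K, #({x} : Set C.K) < Order.succ C.kap := by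
      intro x
      rw [mk_singleton]
      exact lt_of_lt_of_le one_lt_aleph0 (C.h0.trans (Order.le_succ _))
    obtain ⟨k2, hk2⟩ := C.bndK {kstar} (hsing kstar)
    have hk2' : kstar < k2 := hk2 kstar rfl
    have hBF : B ⊆ C.F G S kstar := by
      intro b hb
      exact C.F_mono G S (hkstar _ (mem_range_self ⟨b, hb⟩)) (hkf ⟨b, hb⟩)
    have hBX : B ⊆ S ∪ ⋃ j : (Iio k2 : Set C.K), C.F G S j.1 := by
      refine hBF.trans (subset_trans ?_ subset_union_right)
      exact subset_iUnion_of_subset (⟨kstar, hk2'⟩ : (Iio k2 : Set C.K)) (subset_refl _)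
    have hcn : C.cn G B ⊆ C.F G S k2 := by
      rw [F_eq]
      intro v hv
      refine Or.inr (mem_iUnion.mpr ⟨⟨B, hBX, hBk⟩, hv⟩)
    exact hcn.trans (subset_trans (subset_iUnion_of_subset k2 (subset_refl _))
      subset_union_right)
  · refine (mk_union_le _ _).trans ?_
    have hU : #(⋃ k, C.F G S k) ≤ C.mu := by
      refine (mk_iUnion_le _).trans ?_
      have hsup : ⨆ k, #(C.F G S k) ≤ C.mu := ciSup_le' fun k => C.F_card G hG S hS k
      calc #C.K * (⨆ k, #(C.F G S k)) ≤ C.mu * C.mu := by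
            refine mul_le_mul' ?_ hsup
            rw [C.mkK]
            exact C.kapsucc_le_mu
        _ = C.mu := mul_eq_self C.mu_inf
    calc #S + _ ≤ C.mu + C.mu := add_le_add hS hU
      _ = C.mu := add_eq_self C.mu_inf

end Closure

section Chain
variable (G : SimpleGraph C.V)

open scoped Classical in
/-- closure operator (choice) -/
noncomputable def cl (S : Set C.V) : Set C.V :=
  if h : NoKbip G C.lam C.kap ∧ #S ≤ C.mu then (C.closure_exists G h.1 S h.2).choose
  else univ

lemma cl_spec (hG : NoKbip G C.lam C.kap) (S : Set C.V) (hS : #S ≤ C.mu) :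
    S ⊆ C.cl G S ∧ C.Closed G (C.cl G S) ∧ #(C.cl G S) ≤ C.mu := by
  unfold cl
  rw [dif_pos ⟨hG, hS⟩]
  exact (C.closure_exists G hG S hS).choose_spec

/-- the increasing chain of closed sets -/
noncomputable def Wc : C.V → Set C.V :=
  wellFounded_lt.fix fun v ih => C.cl G ((⋃ j : Iio v, ih j.1 j.2) ∪ {v})

noncomputable def U (v : C.V) : Set C.V := ⋃ j : (Iio v : Set C.V), C.Wc G j.1

lemma Wc_eq (v : C.V) : C.Wc G v = C.cl G (C.U G v ∪ {v}) := by
  unfold Wc U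
  rw [WellFounded.fix_eq]
  rfl

lemma Wc_subset_U {u v : C.V} (h : u < v) : C.Wc G u ⊆ C.U G v :=
  subset_iUnion_of_subset (⟨u, h⟩ : (Iio v : Set C.V)) (subset_refl _)

variable (hG : NoKbip G C.lam C.kap)
include hG

lemma Wc_card (v : C.V) : #(C.Wc G v) ≤ C.mu := by
  induction v using WellFoundedLT.induction with
  | ind v ih => ?_
  rw [Wc_eq]
  have harg : #(C.U G v ∪ {v} : Set C.V) ≤ C.mu := by
    refine (mk_union_le _ _).trans ?_
    have hU : #(C.U G v) ≤ C.mu := by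
      unfold U
      rcases isEmpty_or_nonempty (Iio v : Set C.V) with hemp | hne
      · rw [iUnion_of_empty]; simp [Cardinal.zero_le]
      · refine (mk_iUnion_le _).trans ?_
        have hsup : ⨆ j : (Iio v : Set C.V), #(C.Wc G j.1) ≤ C.mu :=
          ciSup_le' fun j => ih j.1 j.2
        calc #(Iio v : Set C.V) * (⨆ j : (Iio v : Set C.V), #(C.Wc G j.1)) ≤ C.mu * C.mu :=
              mul_le_mul' (C.mkIio_le_mu v) hsup
          _ = C.mu := mul_eq_self C.mu_inf
    calc #(C.U G v) + #({v} : Set C.V) ≤ C.mu + C.mu := by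
          refine add_le_add hU ?_
          rw [mk_singleton]
          exact one_lt_aleph0.le.trans C.mu_inf
      _ = C.mu := add_eq_self C.mu_inf
  exact (C.cl_spec G hG _ harg).2.2

lemma U_card (v : C.V) : #(C.U G v) ≤ C.mu := by
  unfold U
  rcases isEmpty_or_nonempty (Iio v : Set C.V) with hemp | hne
  · rw [iUnion_of_empty]; simp [Cardinal.zero_le]
  · refine (mk_iUnion_le _).trans ?_
    have hsup : ⨆ j : (Iio v : Set C.V), #(C.Wc G j.1) ≤ C.mu :=
      ciSup_le' fun j => C.Wc_card G hG j.1
    calc #(Iio v : Set C.V) * (⨆ j : (Iio v : Set C.V), #(C.Wc G j.1)) ≤ C.mu * C.mu :=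
          mul_le_mul' (C.mkIio_le_mu v) hsup
      _ = C.mu := mul_eq_self C.mu_inf

lemma Wc_arg_card (v : C.V) : #(C.U G v ∪ {v} : Set C.V) ≤ C.mu := by
  refine (mk_union_le _ _).trans ?_
  calc #(C.U G v) + #({v} : Set C.V) ≤ C.mu + C.mu := by
        refine add_le_add (C.U_card G hG v) ?_
        rw [mk_singleton]
        exact one_lt_aleph0.le.trans C.mu_inf
    _ = C.mu := add_eq_self C.mu_inf

lemma Wc_closed (v : C.V) : C.Closed G (C.Wc G v) := by
  rw [Wc_eq]
  exact (C.cl_spec G hG _ (C.Wc_arg_card G hG v)).2.1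

lemma subset_Wc (v : C.V) : C.U G v ∪ {v} ⊆ C.Wc G v := by
  rw [Wc_eq]
  exact (C.cl_spec G hG _ (C.Wc_arg_card G hG v)).1

lemma mem_Wc_self (v : C.V) : v ∈ C.Wc G v :=
  C.subset_Wc G hG v (Or.inr rfl)

lemma U_subset_Wc (v : C.V) : C.U G v ⊆ C.Wc G v :=
  subset_union_left.trans (C.subset_Wc G hG v)

lemma Wc_mono {u v : C.V} (h : u ≤ v) : C.Wc G u ⊆ C.Wc G v := by
  rcases lt_or_eq_of_le h with h | h
  · exact (C.Wc_subset_U G h).trans (C.U_subset_Wc G hG v)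
  · rw [h]

/-- the G-block of a vertex -/
noncomputable def vOf (d : C.V) : C.V :=
  wellFounded_lt.min {u : C.V | d ∈ C.Wc G u} ⟨d, C.mem_Wc_self G hG d⟩

lemma mem_Wc_vOf (d : C.V) : d ∈ C.Wc G (C.vOf G hG d) :=
  wellFounded_lt.min_mem {u : C.V | d ∈ C.Wc G u} _

lemma vOf_min {d u : C.V} (h : d ∈ C.Wc G u) : C.vOf G hG d ≤ u :=
  not_lt.mp (fun hc => wellFounded_lt.not_lt_min {u : C.V | d ∈ C.Wc G u} h hc)

lemma not_mem_Wc_of_lt_vOf {d u : C.V} (h : u < C.vOf G hG d) : d ∉ C.Wc G u :=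
  fun hc => absurd (C.vOf_min G hG hc) (not_le.mpr h)

lemma not_mem_U_vOf (d : C.V) : d ∉ C.U G (C.vOf G hG d) := by
  intro hc
  obtain ⟨t, ⟨j, rfl⟩, hj⟩ := hc
  exact C.not_mem_Wc_of_lt_vOf G hG j.2 hj

lemma mem_Wc_iff_vOf_le {d u : C.V} : d ∈ C.Wc G u ↔ C.vOf G hG d ≤ u := by
  constructor
  · exact C.vOf_min G hG
  · intro h
    exact C.Wc_mono G hG h (C.mem_Wc_vOf G hG d)

lemma mem_U_vOf_lt {d v : C.V} (h : d ∈ C.U G v) : C.vOf G hG d < v := by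
  obtain ⟨t, ⟨j, rfl⟩, hj⟩ := h
  exact lt_of_le_of_lt (C.vOf_min G hG hj) j.2

/-- key fact: small intersection of neighborhoods with earlier closed stages -/
lemma key1 {d g : C.V} (h : g < C.vOf G hG d) :
    #(G.neighborSet d ∩ C.Wc G g : Set C.V) < C.kap := by
  by_contra hc
  obtain ⟨B, hBsub, hBk⟩ := le_mk_iff_exists_subset.mp (not_lt.mp hc)
  have hd : d ∈ C.cn G B := by
    intro b hb
    exact ((hBsub hb).1 : G.Adj d b)
  have : d ∈ C.Wc G g :=
    C.Wc_closed G hG g B (hBsub.trans inter_subset_right) hBk hd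
  exact C.not_mem_Wc_of_lt_vOf G hG h this

/-- key fact: the full earlier neighborhood is of size at most κ -/
lemma key2 (d : C.V) : #(G.neighborSet d ∩ C.U G (C.vOf G hG d) : Set C.V) ≤ C.kap := by
  set v := C.vOf G hG d with hv
  set X : Set C.V := G.neighborSet d ∩ C.U G v with hX
  by_contra hc
  have hkap : C.kap < #X := not_le.mp hc
  -- choose stages
  have hst : ∀ x : ↥X, ∃ g : C.V, g < v ∧ (x : C.V) ∈ C.Wc G g := by
    rintro ⟨x, hx⟩
    obtain ⟨t, ⟨j, rfl⟩, hj⟩ := hx.2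
    exact ⟨j.1, j.2, hj⟩
  choose s hs1 hs2 using hst
  set rng : Set C.V := range s with hrng
  rcases le_or_gt #rng C.kap with hsm | hbig
  · -- small range: X is a small union of small pieces
    have hXsub : X ⊆ ⋃ g : ↥rng, (G.neighborSet d ∩ C.Wc G g.1 : Set C.V) := by
      intro x hx
      refine mem_iUnion.mpr ⟨⟨s ⟨x, hx⟩, mem_range_self _⟩, hx.1, hs2 ⟨x, hx⟩⟩
    have : #X ≤ C.kap := by
      refine (mk_le_mk_of_subset hXsub).trans ?_
      refine (mk_iUnion_le _).trans ?_
      rcases isEmpty_or_nonempty ↥rng with hemp | hne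
      · rw [mk_eq_zero ↥rng, zero_mul]
        exact Cardinal.zero_le _
      · have hsup : ⨆ g : ↥rng, #(G.neighborSet d ∩ C.Wc G g.1 : Set C.V) ≤ C.kap := by
          refine ciSup_le' fun g => ?_
          obtain ⟨x, hxg⟩ := g.2
          have hlt : g.1 < v := hxg ▸ hs1 x
          exact (C.key1 G hG hlt).le
        calc #↥rng * (⨆ g : ↥rng, #(G.neighborSet d ∩ C.Wc G g.1 : Set C.V)) ≤
              C.kap * C.kap := mul_le_mul' hsm hsup
          _ = C.kap := mul_eq_self C.h0
    exact absurd this (not_le.mpr hkap)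
  · -- big range: apply ex_lemma
    obtain ⟨gs, hgs, hcard⟩ := C.ex_lemma rng hbig
    -- build κ-many elements of X inside Wc gs
    have hinj : ∀ g : ↥(rng ∩ Iio gs : Set C.V), ∃ x : ↥X, s x = g.1 := by
      rintro ⟨g, hg, _⟩
      exact hg
    choose pick hpick using hinj
    have hpickinj : Function.Injective pick := by
      intro a b hab
      apply Subtype.ext
      rw [← hpick a, ← hpick b, hab]
    have hin : ∀ g : ↥(rng ∩ Iio gs : Set C.V),
        (pick g : C.V) ∈ (G.neighborSet d ∩ C.Wc G gs : Set C.V) := by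
      intro g
      refine ⟨(pick g).2.1, ?_⟩
      have h1 : (pick g : C.V) ∈ C.Wc G (s (pick g)) := hs2 _
      rw [hpick g] at h1
      exact C.Wc_mono G hG (le_of_lt g.2.2) h1
    have hglt : gs < v := by
      obtain ⟨x, hxg⟩ := hgs
      exact hxg ▸ hs1 x
    have : C.kap ≤ #(G.neighborSet d ∩ C.Wc G gs : Set C.V) := by
      refine hcard.trans ?_
      exact mk_le_of_injective (f := fun g => (⟨(pick g : C.V), hin g⟩ :
        ↥(G.neighborSet d ∩ C.Wc G gs : Set C.V)))
        (by
          intro a b hab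
          have h2 := congrArg Subtype.val hab
          simp only at h2
          exact hpickinj (Subtype.ext h2))
    exact absurd (C.key1 G hG hglt) (not_lt.mpr this)

end Chain


section Embed
open scoped Classical
variable (G : SimpleGraph C.V) (hG : NoKbip G C.lam C.kap)

noncomputable def DD (v : C.V) : Set C.V := C.Wc G v \ C.U G v

lemma mem_DD_vOf (d : C.V) : d ∈ C.DD G (C.vOf G hG d) :=
  ⟨C.mem_Wc_vOf G hG d, C.not_mem_U_vOf G hG d⟩

lemma mk_DD_le (hG : NoKbip G C.lam C.kap) (v : C.V) : #(C.DD G v) ≤ C.mu :=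
  (mk_le_mk_of_subset diff_subset).trans (C.Wc_card G hG v)

noncomputable def rho (v : C.V) : ↥(C.DD G v) ↪ C.M :=
  Classical.choice ((Cardinal.le_def _ _).mp
    (by rw [C.mkM]; exact C.mk_DD_le G hG v))

/-- one step of the embedding recursion -/
noncomputable def phiStep (f : C.V → C.V) (d : C.V) : C.V :=
  C.e.symm (C.vOf G hG d,
    (if h : C.Allowed (C.vOf G hG d)
        (f '' (G.neighborSet d ∩ C.U G (C.vOf G hG d)))
      then Classical.choose (C.sigma_surj (C.vOf G hG d) ⟨_, h⟩)
      else Classical.arbitrary C.M),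
    (C.rho G hG (C.vOf G hG d)) ⟨d, C.mem_DD_vOf G hG d⟩)

lemma phiStep_congr (f g : C.V → C.V) (d : C.V)
    (h : ∀ x ∈ G.neighborSet d ∩ C.U G (C.vOf G hG d), f x = g x) :
    C.phiStep G hG f d = C.phiStep G hG g d := by
  unfold phiStep
  have him : f '' (G.neighborSet d ∩ C.U G (C.vOf G hG d)) =
      g '' (G.neighborSet d ∩ C.U G (C.vOf G hG d)) := image_congr h
  simp only [him]

/-- the embedding, by well-founded recursion on the block of a vertex -/
noncomputable def phi : C.V → C.V :=
  (InvImage.wf (C.vOf G hG) wellFounded_lt).fix fun d ih =>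
    C.phiStep G hG
      (fun d' => if hh : C.vOf G hG d' < C.vOf G hG d then ih d' hh else d) d

/-- the request set of a vertex -/
noncomputable def Yreq (d : C.V) : Set C.V :=
  C.phi G hG '' (G.neighborSet d ∩ C.U G (C.vOf G hG d))

lemma phi_eq (d : C.V) :
    C.phi G hG d = C.phiStep G hG (C.phi G hG) d := by
  have h0 : C.phi G hG d = C.phiStep G hG
      (fun d' => if hh : C.vOf G hG d' < C.vOf G hG d
        then C.phi G hG d' else d) d :=
    WellFounded.fix_eq _ _ d
  rw [h0]
  apply C.phiStep_congr G hG
  intro x hx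
  rw [dif_pos (C.mem_U_vOf_lt G hG hx.2)]

lemma phi_eq' (d : C.V) :
    C.phi G hG d = C.e.symm (C.vOf G hG d,
      (if h : C.Allowed (C.vOf G hG d) (C.Yreq G hG d)
        then Classical.choose (C.sigma_surj (C.vOf G hG d) ⟨_, h⟩)
        else Classical.arbitrary C.M),
      (C.rho G hG (C.vOf G hG d)) ⟨d, C.mem_DD_vOf G hG d⟩) := by
  rw [phi_eq]
  rfl

lemma blk_phi (d : C.V) : C.blk (C.phi G hG d) = C.vOf G hG d := by
  rw [phi_eq']
  show (C.e (C.e.symm _)).1 = _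
  rw [Equiv.apply_symm_apply]

lemma Yreq_allowed (d : C.V) : C.Allowed (C.vOf G hG d) (C.Yreq G hG d) := by
  refine ⟨?_, ?_, ?_⟩
  · rintro y ⟨d', hd', rfl⟩
    rw [C.blk_phi G hG d']
    exact C.mem_U_vOf_lt G hG hd'.2
  · exact mk_image_le.trans (C.key2 G hG d)
  · intro g g' hgg' hg'
    have hglt : g < C.vOf G hG d := lt_trans hgg' hg'
    have hsub : C.Yreq G hG d ∩ {y | C.blk y ≤ g} ⊆
        C.phi G hG '' (G.neighborSet d ∩ C.Wc G g) := by
      rintro y ⟨⟨d', hd', rfl⟩, hble⟩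
      refine ⟨d', ⟨hd'.1, ?_⟩, rfl⟩
      have hble' : C.blk (C.phi G hG d') ≤ g := hble
      rw [C.blk_phi G hG d'] at hble'
      exact (C.mem_Wc_iff_vOf_le G hG).mpr hble'
    refine lt_of_le_of_lt ((mk_le_mk_of_subset hsub).trans mk_image_le) ?_
    exact C.key1 G hG hglt

lemma Yof_phi (d : C.V) : C.Yof (C.phi G hG d) = C.Yreq G hG d := by
  have h := C.Yreq_allowed G hG d
  unfold Yof
  rw [C.blk_phi G hG d]
  have hlab : C.lab (C.phi G hG d) =
      Classical.choose (C.sigma_surj (C.vOf G hG d) ⟨C.Yreq G hG d, h⟩) := by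
    rw [phi_eq']
    show (C.e (C.e.symm _)).2.1 = _
    rw [Equiv.apply_symm_apply]
    rw [dif_pos h]
  rw [hlab, Classical.choose_spec (C.sigma_surj (C.vOf G hG d) ⟨C.Yreq G hG d, h⟩)]

lemma cnt_phi (d : C.V) :
    (C.e (C.phi G hG d)).2.2 = (C.rho G hG (C.vOf G hG d)) ⟨d, C.mem_DD_vOf G hG d⟩ := by
  rw [phi_eq', Equiv.apply_symm_apply]

lemma rho_eq_self {v w : C.V} (hvw : v = w) (x y : C.V) (hx : x ∈ C.DD G v)
    (hy : y ∈ C.DD G w)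
    (h : (C.rho G hG v) ⟨x, hx⟩ = (C.rho G hG w) ⟨y, hy⟩) : x = y := by
  subst hvw
  exact congrArg Subtype.val ((C.rho G hG v).injective h)

lemma phi_inj : Function.Injective (C.phi G hG) := by
  intro a b hab
  have hv : C.vOf G hG a = C.vOf G hG b := by
    rw [← C.blk_phi G hG a, ← C.blk_phi G hG b, hab]
  have hc : (C.e (C.phi G hG a)).2.2 = (C.e (C.phi G hG b)).2.2 := by rw [hab]
  rw [C.cnt_phi G hG a, C.cnt_phi G hG b] at hc
  exact C.rho_eq_self G hG hv a b _ _ hc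

lemma phi_edge {a b : C.V} (hadj : G.Adj a b) :
    (C.Gstar).Adj (C.phi G hG a) (C.phi G hG b) := by
  have hne : C.phi G hG a ≠ C.phi G hG b :=
    fun h => G.ne_of_adj hadj (C.phi_inj G hG h)
  rcases lt_trichotomy (C.vOf G hG a) (C.vOf G hG b) with h | h | h
  · -- a is in an earlier block: phi a ∈ Yof (phi b)
    refine ⟨hne, Or.inr (Or.inl ?_)⟩
    rw [C.Yof_phi G hG b]
    refine ⟨a, ⟨hadj.symm, ?_⟩, rfl⟩
    exact C.Wc_subset_U G h (C.mem_Wc_vOf G hG a)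
  · refine ⟨hne, Or.inl ?_⟩
    rw [C.blk_phi G hG a, C.blk_phi G hG b, h]
  · refine ⟨hne, Or.inr (Or.inr ?_)⟩
    rw [C.Yof_phi G hG a]
    refine ⟨b, ⟨hadj, ?_⟩, rfl⟩
    exact C.Wc_subset_U G h (C.mem_Wc_vOf G hG b)

end Embed

theorem main : ∃ Gstar : SimpleGraph C.V, NoKbip Gstar C.lam C.kap ∧
    ∀ G : SimpleGraph C.V, NoKbip G C.lam C.kap →
      ∃ f, WeakEmb G Gstar f := by
  refine ⟨C.Gstar, C.gstar_noKbip, fun G hG => ⟨C.phi G hG, C.phi_inj G hG, ?_⟩⟩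
  intro a b hadj
  exact C.phi_edge G hG hadj

end Ctx
end Stmt19


/-- If `λ = μ⁺`, `κ < μ`, `θ = λ` and `μ = μ^κ`, then `𝔥_{λ,λ,κ}` has a we-universal
member. -/
theorem stmt_19 (lam mu kap : Cardi) (h0 : ℵ₀ ≤ kap) (h1 : kap < mu)
    (h2 : lam = Order.succ mu) (h3 : mu ^ kap = mu) :
    ∃ Gstar : SimpleGraph (Ordinal.ToType lam.ord), NoKbip Gstar lam kap ∧
      ∀ G : SimpleGraph (Ordinal.ToType lam.ord), NoKbip G lam kap →
        ∃ f, WeakEmb G Gstar f := by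
  subst h2
  exact Stmt19.Ctx.main ⟨mu, kap, h0, h1, h3⟩
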